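/- Let p = p(n) ∈ [0,1] satisfy n(1−p)^{8/5} → 0 or n√p → 0 as n → ∞. Then with probability tending to 1 as n → ∞, the Erdős–Rényi random graph G(n,p) is locally cochordal, and with probability tending to 1 it is locally 4-cochordal. (Equivalently, with high probability the edge ideal I(n,p) has local linear resolution and local linear presentation.) -/
import Mathlib


open Filter

/-- Probability weight of a given graph `G` under the Erdős–Rényi model `G(n,p)`:
each of the `n.choose 2` possible edges is present independently with probability `p`. -/
noncomputable def graphWeight (n : ℕ) (p : ℝ) (G : SimpleGraph (Fin n)) : ℝ :=
  p ^ Nat.card G.edgeSet * (1 - p) ^ (n.choose 2 - Nat.card G.edgeSet)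

/-- Probability of the event `A` under the Erdős–Rényi random graph `G(n,p)`. -/
noncomputable def erProb (n : ℕ) (p : ℝ) (A : Set (SimpleGraph (Fin n))) : ℝ :=
  ∑ G : SimpleGraph (Fin n), A.indicator (graphWeight n p) G

/-- `v : ZMod k → V` describes a chordless (induced) `k`-cycle of `G`:
it is injective, consecutive vertices are adjacent, and non-consecutive
vertices are non-adjacent. -/
def IsChordlessCycleOn {V : Type} (G : SimpleGraph V) {k : ℕ} (v : ZMod k → V) : Prop :=
  Function.Injective v ∧
    (∀ i : ZMod k, G.Adj (v i) (v (i + 1))) ∧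
    ∀ i j : ZMod k, i ≠ j → j ≠ i + 1 → i ≠ j + 1 → ¬G.Adj (v i) (v j)

/-- A graph is 4-chordal if every cycle of length 4 has a chord, i.e. there is
no chordless 4-cycle. -/
def FourChordal {V : Type} (G : SimpleGraph V) : Prop :=
  ¬∃ v : ZMod 4 → V, IsChordlessCycleOn G v

/-- A graph is chordal if every cycle of length at least 4 has a chord, i.e. there is
no chordless cycle of length at least 4. -/
def Chordal {V : Type} (G : SimpleGraph V) : Prop :=
  ∀ k : ℕ, 4 ≤ k → ¬∃ v : ZMod k → V, IsChordlessCycleOn G v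

/-- A graph is locally cochordal if, for every vertex `v`, the induced subgraph on the
vertices outside the closed neighborhood of `v` has chordal complement. -/
def LocallyCochordal {V : Type} (G : SimpleGraph V) : Prop :=
  ∀ v : V, Chordal ((G.induce {u | u ≠ v ∧ ¬G.Adj v u})ᶜ)

/-- A graph is locally 4-cochordal if, for every vertex `v`, the induced subgraph on the
vertices outside the closed neighborhood of `v` has 4-chordal complement. -/
def LocallyFourCochordal {V : Type} (G : SimpleGraph V) : Prop :=
  ∀ v : V, FourChordal ((G.induce {u | u ≠ v ∧ ¬G.Adj v u})ᶜ)

open Finset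

open scoped Classical in
/-- The edge finset of a graph, as a finset of non-diagonal `Sym2` elements. -/
noncomputable def gEdges {n : ℕ} (G : SimpleGraph (Fin n)) :
    Finset {e : Sym2 (Fin n) // ¬ e.IsDiag} :=
  Finset.univ.filter (fun e => e.1 ∈ G.edgeSet)

def gOf {n : ℕ} (s : Finset {e : Sym2 (Fin n) // ¬ e.IsDiag}) : SimpleGraph (Fin n) :=
  SimpleGraph.fromEdgeSet (Subtype.val '' (↑s : Set {e : Sym2 (Fin n) // ¬ e.IsDiag}))

lemma mem_gEdges {n : ℕ} {G : SimpleGraph (Fin n)} {e : {e : Sym2 (Fin n) // ¬ e.IsDiag}} :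
    e ∈ gEdges G ↔ e.1 ∈ G.edgeSet := by
  classical
  simp [gEdges]

lemma gEdges_gOf {n : ℕ} (s : Finset {e : Sym2 (Fin n) // ¬ e.IsDiag}) :
    gEdges (gOf s) = s := by
  ext e
  rw [mem_gEdges]
  simp only [gOf, SimpleGraph.edgeSet_fromEdgeSet, Set.mem_diff, Set.mem_image]
  constructor
  · rintro ⟨⟨e', he', hv⟩, -⟩
    rwa [show e = e' from Subtype.ext hv.symm]
  · intro he
    exact ⟨⟨e, by simpa using he, rfl⟩, e.2⟩

lemma gOf_gEdges {n : ℕ} (G : SimpleGraph (Fin n)) : gOf (gEdges G) = G := by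
  have : Subtype.val '' (↑(gEdges G) : Set {e : Sym2 (Fin n) // ¬ e.IsDiag}) = G.edgeSet := by
    ext x
    simp only [Set.mem_image, Finset.mem_coe]
    constructor
    · rintro ⟨e, he, rfl⟩; exact mem_gEdges.1 he
    · intro hx
      exact ⟨⟨x, G.not_isDiag_of_mem_edgeSet hx⟩, mem_gEdges.2 hx, rfl⟩
  rw [gOf, this, SimpleGraph.fromEdgeSet_edgeSet]

lemma card_gEdges {n : ℕ} (G : SimpleGraph (Fin n)) :
    Nat.card G.edgeSet = (gEdges G).card := by
  classical
  have e : G.edgeSet ≃ {e : {e : Sym2 (Fin n) // ¬ e.IsDiag} // e ∈ gEdges G} :=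
    { toFun := fun x => ⟨⟨x.1, G.not_isDiag_of_mem_edgeSet x.2⟩, mem_gEdges.2 x.2⟩
      invFun := fun e => ⟨e.1.1, mem_gEdges.1 e.2⟩
      left_inv := fun x => rfl
      right_inv := fun e => rfl }
  rw [Nat.card_congr e, Nat.card_eq_fintype_card, Fintype.card_coe]

lemma card_EN (n : ℕ) : Fintype.card {e : Sym2 (Fin n) // ¬ e.IsDiag} = n.choose 2 := by
  rw [Sym2.card_subtype_not_diag, Fintype.card_fin]

/-- Key computation: probability that a given set of pairs are all non-edges. -/
lemma erProb_nonedges (n : ℕ) (p : ℝ) (S : Finset {e : Sym2 (Fin n) // ¬ e.IsDiag}) :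
    erProb n p {G | ∀ e ∈ S, e.1 ∉ G.edgeSet} = (1 - p) ^ S.card := by
  classical
  have hbij : Function.Bijective (gOf (n := n)) :=
    (Equiv.mk gOf gEdges gEdges_gOf gOf_gEdges).bijective
  rw [erProb, ← Function.Bijective.sum_comp hbij]
  have hterm : ∀ s : Finset {e : Sym2 (Fin n) // ¬ e.IsDiag},
      ({G | ∀ e ∈ S, e.1 ∉ G.edgeSet} : Set (SimpleGraph (Fin n))).indicator
        (graphWeight n p) (gOf s)
      = if s ⊆ Finset.univ \ S then p ^ s.card * (1 - p) ^ (n.choose 2 - s.card) else 0 := by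
    intro s
    have hmem : gOf s ∈ {G : SimpleGraph (Fin n) | ∀ e ∈ S, e.1 ∉ G.edgeSet}
        ↔ s ⊆ Finset.univ \ S := by
      simp only [Set.mem_setOf_eq]
      constructor
      · intro h e he
        simp only [Finset.mem_sdiff, Finset.mem_univ, true_and]
        intro heS
        exact h e heS (by rw [← mem_gEdges, gEdges_gOf]; exact he)
      · intro h e heS hedge
        have : e ∈ s := by rwa [← gEdges_gOf s, mem_gEdges]
        exact (Finset.mem_sdiff.1 (h this)).2 heS
    have hw : graphWeight n p (gOf s) = p ^ s.card * (1 - p) ^ (n.choose 2 - s.card) := by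
      rw [graphWeight, card_gEdges, gEdges_gOf]
    rw [Set.indicator_apply]
    by_cases hs : s ⊆ Finset.univ \ S
    · rw [if_pos (hmem.2 hs), if_pos hs, hw]
    · rw [if_neg (fun hh => hs (hmem.1 hh)), if_neg hs]
  rw [Finset.sum_congr rfl (fun s _ => hterm s)]
  rw [Finset.sum_ite, Finset.sum_const_zero, add_zero]
  set T : Finset {e : Sym2 (Fin n) // ¬ e.IsDiag} := Finset.univ \ S with hT
  have hfilter : Finset.univ.filter (fun s => s ⊆ T) = T.powerset := by
    ext s; simp [Finset.mem_powerset]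
  rw [hfilter]
  have hcardT : T.card = n.choose 2 - S.card := by
    rw [hT, Finset.card_sdiff_of_subset (Finset.subset_univ S), Finset.card_univ, card_EN]
  have hScard : S.card ≤ n.choose 2 := by
    rw [← card_EN n, ← Finset.card_univ]; exact Finset.card_le_card (Finset.subset_univ S)
  have key : ∀ s ∈ T.powerset,
      p ^ s.card * (1 - p) ^ (n.choose 2 - s.card)
        = (1 - p) ^ S.card * ((∏ _e ∈ s, p) * ∏ _e ∈ T \ s, (1 - p)) := by
    intro s hs
    rw [Finset.mem_powerset] at hs
    have hsc : s.card ≤ T.card := Finset.card_le_card hs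
    rw [Finset.prod_const, Finset.prod_const, Finset.card_sdiff_of_subset hs]
    have : n.choose 2 - s.card = S.card + (T.card - s.card) := by
      omega
    rw [this, pow_add]
    ring
  rw [Finset.sum_congr rfl key, ← Finset.mul_sum, ← Finset.prod_add]
  simp

lemma erProb_univ (n : ℕ) (p : ℝ) : erProb n p Set.univ = 1 := by
  have := erProb_nonedges n p ∅
  simpa using this

lemma graphWeight_nonneg {n : ℕ} {p : ℝ} (hp : p ∈ Set.Icc (0:ℝ) 1) (G : SimpleGraph (Fin n)) :
    0 ≤ graphWeight n p G :=
  mul_nonneg (pow_nonneg hp.1 _) (pow_nonneg (by linarith [hp.2]) _)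

lemma erProb_nonneg {n : ℕ} {p : ℝ} (hp : p ∈ Set.Icc (0:ℝ) 1) (A : Set (SimpleGraph (Fin n))) :
    0 ≤ erProb n p A :=
  Finset.sum_nonneg fun G _ => Set.indicator_nonneg (fun G _ => graphWeight_nonneg hp G) G

lemma erProb_mono {n : ℕ} {p : ℝ} (hp : p ∈ Set.Icc (0:ℝ) 1) {A B : Set (SimpleGraph (Fin n))}
    (hAB : A ⊆ B) : erProb n p A ≤ erProb n p B :=
  Finset.sum_le_sum fun G _ =>
    Set.indicator_le_indicator_of_subset hAB (fun G => graphWeight_nonneg hp G) G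

lemma erProb_le_one {n : ℕ} {p : ℝ} (hp : p ∈ Set.Icc (0:ℝ) 1) (A : Set (SimpleGraph (Fin n))) :
    erProb n p A ≤ 1 := by
  rw [← erProb_univ n p]; exact erProb_mono hp (Set.subset_univ A)

lemma erProb_add_compl {n : ℕ} {p : ℝ} (A : Set (SimpleGraph (Fin n))) :
    erProb n p A + erProb n p Aᶜ = 1 := by
  rw [← erProb_univ n p, erProb, erProb, erProb, ← Finset.sum_add_distrib]
  congr 1
  ext G
  have := congrFun (Set.indicator_self_add_compl A (graphWeight n p)) G
  simpa [Set.indicator_univ] using this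

lemma erProb_union_bound {n : ℕ} {p : ℝ} (hp : p ∈ Set.Icc (0:ℝ) 1)
    {ι : Type*} (I : Finset ι) (A : Set (SimpleGraph (Fin n))) (B : ι → Set (SimpleGraph (Fin n)))
    (h : ∀ G ∈ A, ∃ i ∈ I, G ∈ B i) :
    erProb n p A ≤ ∑ i ∈ I, erProb n p (B i) := by
  calc erProb n p A ≤ ∑ G : SimpleGraph (Fin n), ∑ i ∈ I, (B i).indicator (graphWeight n p) G := by
        apply Finset.sum_le_sum
        intro G _
        by_cases hG : G ∈ A
        · obtain ⟨i, hi, hBi⟩ := h G hG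
          calc A.indicator (graphWeight n p) G = graphWeight n p G := Set.indicator_of_mem hG _
            _ = (B i).indicator (graphWeight n p) G := (Set.indicator_of_mem hBi _).symm
            _ ≤ ∑ i ∈ I, (B i).indicator (graphWeight n p) G :=
                Finset.single_le_sum (fun j _ =>
                  Set.indicator_nonneg (fun G _ => graphWeight_nonneg hp G) G) hi
        · rw [Set.indicator_of_notMem hG]
          exact Finset.sum_nonneg fun i _ =>
            Set.indicator_nonneg (fun G _ => graphWeight_nonneg hp G) G
    _ = ∑ i ∈ I, erProb n p (B i) := Finset.sum_comm

lemma zmod_cast_ne {k a b : ℕ} (ha : a < k) (hb : b < k) (hab : a ≠ b) :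
    (a : ZMod k) ≠ (b : ZMod k) := by
  haveI : NeZero k := ⟨by omega⟩
  intro h
  apply hab
  have := congrArg ZMod.val h
  rwa [ZMod.val_cast_of_lt ha, ZMod.val_cast_of_lt hb] at this

lemma zmod_one_ne_zero {k : ℕ} (hk : 4 ≤ k) : (1 : ZMod k) ≠ 0 := by
  have := zmod_cast_ne (k := k) (a := 1) (b := 0) (by omega) (by omega) (by omega)
  simpa using this

lemma zmod_two_ne_zero {k : ℕ} (hk : 4 ≤ k) : (1 + 1 : ZMod k) ≠ 0 := by
  have := zmod_cast_ne (k := k) (a := 2) (b := 0) (by omega) (by omega) (by omega)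
  rw [one_add_one_eq_two]
  simpa using this

/-- The bad event: `v` together with the cycle `w` (all adjacent to `v` in the complement). -/
def BadEvent (n k : ℕ) (v : Fin n) (w : ZMod k → Fin n) : Set (SimpleGraph (Fin n)) :=
  {G | Function.Injective w ∧ (∀ i, w i ≠ v) ∧
    (∀ i, ¬ G.Adj v (w i)) ∧ (∀ i, ¬ G.Adj (w i) (w (i+1)))}

lemma erProb_empty (n : ℕ) (p : ℝ) : erProb n p (∅ : Set (SimpleGraph (Fin n))) = 0 := by
  simp [erProb]

lemma erProb_badEvent {n k : ℕ} {p : ℝ} (hp : p ∈ Set.Icc (0:ℝ) 1) (hk : 4 ≤ k)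
    (v : Fin n) (w : ZMod k → Fin n) :
    erProb n p (BadEvent n k v w) ≤ (1 - p) ^ (2 * k) := by
  haveI : NeZero k := ⟨by omega⟩
  have hq0 : (0:ℝ) ≤ 1 - p := by linarith [hp.2]
  have hq1 : 1 - p ≤ 1 := by linarith [hp.1]
  by_cases hgood : Function.Injective w ∧ ∀ i, w i ≠ v
  · obtain ⟨hinj, hne⟩ := hgood
    have hii : ∀ i : ZMod k, w i ≠ w (i + 1) := by
      intro i h
      have : i = i + 1 := hinj h
      exact zmod_one_ne_zero hk (left_eq_add.mp this)
    let f1 : ZMod k → {e : Sym2 (Fin n) // ¬ e.IsDiag} :=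
      fun i => ⟨s(v, w i), by simp [Sym2.mk_isDiag_iff]; exact fun h => hne i h.symm⟩
    let f2 : ZMod k → {e : Sym2 (Fin n) // ¬ e.IsDiag} :=
      fun i => ⟨s(w i, w (i+1)), by simp [Sym2.mk_isDiag_iff]; exact hii i⟩
    have hf1 : Function.Injective f1 := by
      intro i j h
      have := Subtype.ext_iff.mp h
      simp only [f1, Sym2.eq_iff] at this
      rcases this with ⟨-, h2⟩ | ⟨h1, h2⟩
      · exact hinj h2
      · exact absurd h1.symm (hne j)
    have hf2 : Function.Injective f2 := by
      intro i j h
      have := Subtype.ext_iff.mp h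
      simp only [f2, Sym2.eq_iff] at this
      rcases this with ⟨h1, -⟩ | ⟨h1, h2⟩
      · exact hinj h1
      · have hij : i = j + 1 := hinj h1
        have hji : j = i + 1 := (hinj h2).symm
        rw [hji, add_assoc] at hij
        exact absurd (left_eq_add.mp hij) (zmod_two_ne_zero hk)
    set S : Finset {e : Sym2 (Fin n) // ¬ e.IsDiag} :=
      (Finset.univ.image f1) ∪ (Finset.univ.image f2) with hS
    have hdisj : Disjoint (Finset.univ.image f1) (Finset.univ.image f2) := by
      rw [Finset.disjoint_left]
      rintro e he1 he2
      simp only [Finset.mem_image, Finset.mem_univ, true_and] at he1 he2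
      obtain ⟨i, hi⟩ := he1
      obtain ⟨j, hj⟩ := he2
      rw [← hj] at hi
      have := Subtype.ext_iff.mp hi
      simp only [f1, f2, Sym2.eq_iff] at this
      rcases this with ⟨h1, -⟩ | ⟨h1, -⟩
      · exact hne j h1.symm
      · exact hne (j+1) h1.symm
    have hcard : S.card = 2 * k := by
      rw [hS, Finset.card_union_of_disjoint hdisj,
        Finset.card_image_of_injective _ hf1, Finset.card_image_of_injective _ hf2,
        Finset.card_univ, ZMod.card]
      ring
    have hsub : BadEvent n k v w ⊆ {G | ∀ e ∈ S, e.1 ∉ G.edgeSet} := by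
      rintro G ⟨-, -, h3, h4⟩ e he
      simp only [hS, Finset.mem_union, Finset.mem_image, Finset.mem_univ, true_and] at he
      rcases he with ⟨i, rfl⟩ | ⟨i, rfl⟩
      · simpa [f1, SimpleGraph.mem_edgeSet] using h3 i
      · simpa [f2, SimpleGraph.mem_edgeSet] using h4 i
    calc erProb n p (BadEvent n k v w) ≤ erProb n p {G | ∀ e ∈ S, e.1 ∉ G.edgeSet} :=
          erProb_mono hp hsub
      _ = (1 - p) ^ S.card := erProb_nonedges n p S
      _ = (1 - p) ^ (2 * k) := by rw [hcard]
  · have : BadEvent n k v w = ∅ := by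
      ext G
      simp only [BadEvent, Set.mem_setOf_eq, Set.mem_empty_iff_false, iff_false]
      rintro ⟨h1, h2, -⟩
      exact hgood ⟨h1, h2⟩
    rw [this, erProb_empty]
    positivity

lemma not_locallyCochordal {n : ℕ} {G : SimpleGraph (Fin n)} (h : ¬ LocallyCochordal G) :
    ∃ k ∈ Finset.Icc 4 n, ∃ v : Fin n, ∃ w : ZMod k → Fin n, G ∈ BadEvent n k v w := by
  rw [LocallyCochordal] at h
  push_neg at h
  obtain ⟨v, hv⟩ := h
  rw [Chordal] at hv
  push_neg at hv
  obtain ⟨k, hk, c, hc1, hc2, -⟩ := hv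
  haveI : NeZero k := ⟨by omega⟩
  refine ⟨k, ?_, v, fun i => (c i : Fin n), ?_, ?_, ?_, ?_⟩
  · rw [Finset.mem_Icc]
    refine ⟨hk, ?_⟩
    have := Fintype.card_le_of_injective _ (Subtype.val_injective.comp hc1)
    simpa [ZMod.card] using this
  · exact Subtype.val_injective.comp hc1
  · exact fun i => (c i).2.1
  · exact fun i => (c i).2.2
  · intro i
    have := hc2 i
    rw [SimpleGraph.compl_adj] at this
    have h2 := this.2
    simpa [SimpleGraph.comap_adj] using h2

lemma locallyCochordal_bot {n : ℕ} : LocallyCochordal (⊥ : SimpleGraph (Fin n)) := by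
  intro v k hk
  rintro ⟨c, hinj, -, h3⟩
  haveI : NeZero k := ⟨by omega⟩
  have h02 : (0 : ZMod k) ≠ 2 := by
    have := zmod_cast_ne (k := k) (a := 0) (b := 2) (by omega) (by omega) (by omega)
    simpa using this
  have h21 : (2 : ZMod k) ≠ 0 + 1 := by
    have := zmod_cast_ne (k := k) (a := 2) (b := 1) (by omega) (by omega) (by omega)
    simpa using this
  have h03 : (0 : ZMod k) ≠ 2 + 1 := by
    have := zmod_cast_ne (k := k) (a := 0) (b := 3) (by omega) (by omega) (by omega)
    simpa [show ((2:ZMod k) + 1) = 3 by norm_num] using this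
  have := h3 0 2 h02 h21 h03
  apply this
  rw [SimpleGraph.compl_adj]
  refine ⟨fun hh => h02 (hinj hh), ?_⟩
  simp [SimpleGraph.comap_adj]

lemma locallyCochordal_fourCochordal {V : Type} {G : SimpleGraph V} (h : LocallyCochordal G) :
    LocallyFourCochordal G := fun v => h v 4 le_rfl

/-- Union bound over all apex-cycle structures. -/
lemma erProb_not_LC_le {n : ℕ} {p : ℝ} (hp : p ∈ Set.Icc (0:ℝ) 1) :
    erProb n p {G | LocallyCochordal G}ᶜ
      ≤ ∑ m ∈ Finset.range (n+1), (n:ℝ)^(m+5) * (1-p)^(2*(m+4)) := by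
  classical
  have hub := erProb_union_bound (n := n) (p := p) hp
    (I := (Finset.range (n+1)).sigma
      (fun m => (Finset.univ : Finset (Fin n × (ZMod (m+4) → Fin n)))))
    (A := {G | LocallyCochordal G}ᶜ)
    (B := fun i => BadEvent n (i.1+4) i.2.1 i.2.2)
    (by
      intro G hG
      obtain ⟨k, hk, v, w, hB⟩ := not_locallyCochordal (by simpa using hG)
      rw [Finset.mem_Icc] at hk
      obtain ⟨m, rfl⟩ : ∃ m, k = m + 4 := ⟨k - 4, by omega⟩
      have hm : m < n + 1 := by omega
      exact ⟨⟨m, v, w⟩, Finset.mem_sigma.2 ⟨Finset.mem_range.2 hm, Finset.mem_univ _⟩, hB⟩)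
  refine hub.trans ?_
  rw [Finset.sum_sigma]
  apply Finset.sum_le_sum
  intro m _
  calc (∑ x : Fin n × (ZMod (m+4) → Fin n), erProb n p (BadEvent n (m+4) x.1 x.2))
      ≤ ∑ _x : Fin n × (ZMod (m+4) → Fin n), (1-p)^(2*(m+4)) :=
        Finset.sum_le_sum fun x _ => erProb_badEvent hp (by omega) x.1 x.2
    _ = (Fintype.card (Fin n × (ZMod (m+4) → Fin n)) : ℝ) * (1-p)^(2*(m+4)) := by
        rw [Finset.sum_const, Finset.card_univ, nsmul_eq_mul]
    _ = (n:ℝ)^(m+5) * (1-p)^(2*(m+4)) := by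
        congr 1
        rw [Fintype.card_prod, Fintype.card_fin, Fintype.card_fun, ZMod.card, Fintype.card_fin]
        push_cast
        ring

lemma geom_bound {n : ℕ} {q : ℝ} (hq0 : 0 ≤ q) (ha : (n:ℝ) * q^2 ≤ 1/2) :
    ∑ m ∈ Finset.range (n+1), (n:ℝ)^(m+5) * q^(2*(m+4)) ≤ 2 * ((n:ℝ)^5 * q^8) := by
  have ha0 : (0:ℝ) ≤ (n:ℝ) * q^2 := by positivity
  have step : ∀ m, (n:ℝ)^(m+5) * q^(2*(m+4)) = (n:ℝ)^5 * q^8 * ((n:ℝ) * q^2)^m := by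
    intro m
    rw [pow_add, show 2*(m+4) = 2*m+8 by ring, pow_add, pow_mul, mul_pow]
    ring
  calc ∑ m ∈ Finset.range (n+1), (n:ℝ)^(m+5) * q^(2*(m+4))
      = (n:ℝ)^5 * q^8 * ∑ m ∈ Finset.range (n+1), ((n:ℝ) * q^2)^m := by
        rw [Finset.mul_sum]; exact Finset.sum_congr rfl fun m _ => step m
    _ ≤ (n:ℝ)^5 * q^8 * 2 := by
        apply mul_le_mul_of_nonneg_left _ (by positivity)
        calc ∑ m ∈ Finset.range (n+1), ((n:ℝ) * q^2)^m
            ≤ ∑ m ∈ Finset.range (n+1), (1/(2:ℝ))^m :=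
              Finset.sum_le_sum fun m _ => pow_le_pow_left₀ ha0 ha m
          _ ≤ 2 := sum_geometric_two_le _
    _ = 2 * ((n:ℝ)^5 * q^8) := by ring

lemma erProb_edge {n : ℕ} {p : ℝ} (e : {e : Sym2 (Fin n) // ¬ e.IsDiag}) :
    erProb n p {G | e.1 ∈ G.edgeSet} = p := by
  have h1 := erProb_add_compl (n := n) (p := p) {G | e.1 ∈ G.edgeSet}
  have h2 : {G : SimpleGraph (Fin n) | e.1 ∈ G.edgeSet}ᶜ
      = {G | ∀ e' ∈ ({e} : Finset {e : Sym2 (Fin n) // ¬ e.IsDiag}), e'.1 ∉ G.edgeSet} := by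
    ext G; simp
  rw [h2, erProb_nonedges] at h1
  simp only [Finset.card_singleton, pow_one] at h1
  linarith

lemma erProb_not_LC_le2 {n : ℕ} {p : ℝ} (hp : p ∈ Set.Icc (0:ℝ) 1) :
    erProb n p {G | LocallyCochordal G}ᶜ ≤ (n:ℝ)^2 * p := by
  classical
  have hub := erProb_union_bound (n := n) (p := p) hp
    (I := (Finset.univ : Finset {e : Sym2 (Fin n) // ¬ e.IsDiag}))
    (A := {G | LocallyCochordal G}ᶜ)
    (B := fun e => {G | e.1 ∈ G.edgeSet})
    (by
      intro G hG
      have hGbot : G ≠ ⊥ := by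
        rintro rfl
        exact hG locallyCochordal_bot
      obtain ⟨x, hx⟩ := SimpleGraph.edgeSet_nonempty.2 hGbot
      exact ⟨⟨x, G.not_isDiag_of_mem_edgeSet hx⟩, Finset.mem_univ _, hx⟩)
  refine hub.trans ?_
  have : ∑ e : {e : Sym2 (Fin n) // ¬ e.IsDiag}, erProb n p {G | e.1 ∈ G.edgeSet}
      = (n.choose 2 : ℝ) * p := by
    rw [Finset.sum_congr rfl fun e _ => erProb_edge e, Finset.sum_const, Finset.card_univ,
      Sym2.card_subtype_not_diag, Fintype.card_fin, nsmul_eq_mul]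
  rw [this]
  have hchoose : (n.choose 2 : ℝ) ≤ (n:ℝ)^2 := by
    have : n.choose 2 ≤ n^2 := by
      rw [Nat.choose_two_right]
      calc n * (n-1) / 2 ≤ n * (n-1) := Nat.div_le_self _ _
        _ ≤ n * n := Nat.mul_le_mul_left n (by omega)
        _ = n^2 := (sq n).symm
    calc (n.choose 2 : ℝ) ≤ ((n^2 : ℕ) : ℝ) := by exact_mod_cast this
      _ = (n:ℝ)^2 := by push_cast; ring
  exact mul_le_mul_of_nonneg_right hchoose hp.1


/-- If `n (1-p)^{8/5} → 0` or `n √p → 0`, then with high probability `G(n,p)` is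
locally cochordal and locally 4-cochordal (equivalently, the edge ideal `I(n,p)` has
local linear resolution and local linear presentation). -/
theorem locally_cochordal_whp (p : ℕ → ℝ) (hp : ∀ n, p n ∈ Set.Icc (0 : ℝ) 1)
    (h : Tendsto (fun n : ℕ => (n : ℝ) * (1 - p n) ^ ((8 : ℝ) / 5)) atTop (nhds 0) ∨
      Tendsto (fun n : ℕ => (n : ℝ) * Real.sqrt (p n)) atTop (nhds 0)) :
    Tendsto (fun n : ℕ => erProb n (p n) {G | LocallyCochordal G}) atTop (nhds 1) ∧
    Tendsto (fun n : ℕ => erProb n (p n) {G | LocallyFourCochordal G}) atTop (nhds 1) := by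

  have hq0 : ∀ n, (0:ℝ) ≤ 1 - p n := fun n => by linarith [(hp n).2]
  have hq1 : ∀ n, (1:ℝ) - p n ≤ 1 := fun n => by linarith [(hp n).1]
  have key : Tendsto (fun n : ℕ => erProb n (p n) {G | LocallyCochordal G}) atTop (nhds 1) := by
    rcases h with h1 | h2
    · set b : ℕ → ℝ := fun n => (n:ℝ) * (1 - p n) ^ ((8:ℝ)/5) with hb
      have hlim : Tendsto (fun n => 1 - 2 * (b n)^5) atTop (nhds 1) := by
        have h5 : Tendsto (fun n => (b n)^5) atTop (nhds 0) := by
          have := h1.pow 5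
          simpa using this
        have := (h5.const_mul 2).const_sub 1
        simpa using this
      have hev : ∀ᶠ n in atTop, b n < 1/2 :=
        (tendsto_order.1 h1).2 (1/2) (by norm_num)
      refine tendsto_of_tendsto_of_tendsto_of_le_of_le' hlim tendsto_const_nhds ?_
        (Eventually.of_forall fun n => erProb_le_one (hp n) _)
      filter_upwards [hev] with n hn
      -- the exponent comparison q^2 ≤ q^{8/5}
      have hq2 : (1 - p n)^2 ≤ (1 - p n) ^ ((8:ℝ)/5) := by
        rcases eq_or_lt_of_le (hq0 n) with hq | hq
        · rw [← hq, Real.zero_rpow (by norm_num)]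
          norm_num
        · have := Real.rpow_le_rpow_of_exponent_ge hq (hq1 n)
            (by norm_num : (8:ℝ)/5 ≤ (2:ℝ))
          calc (1 - p n)^2 = (1 - p n) ^ ((2:ℕ):ℝ) := by
                rw [Real.rpow_natCast]
            _ ≤ (1 - p n) ^ ((8:ℝ)/5) := by
                exact_mod_cast this
      have hhalf : (n:ℝ) * (1 - p n)^2 ≤ 1/2 := by
        calc (n:ℝ) * (1 - p n)^2 ≤ (n:ℝ) * (1 - p n) ^ ((8:ℝ)/5) :=
              mul_le_mul_of_nonneg_left hq2 (Nat.cast_nonneg n)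
          _ = b n := rfl
          _ ≤ 1/2 := le_of_lt hn
      have hb5 : (b n)^5 = (n:ℝ)^5 * (1 - p n)^8 := by
        rw [hb]
        rw [mul_pow]
        congr 1
        rw [← Real.rpow_natCast ((1 - p n) ^ ((8:ℝ)/5)) 5, ← Real.rpow_mul (hq0 n),
          show ((8:ℝ)/5) * ((5:ℕ):ℝ) = ((8:ℕ):ℝ) by norm_num, Real.rpow_natCast]
      have hcompl := erProb_add_compl (n := n) (p := p n) {G | LocallyCochordal G}
      have hle : erProb n (p n) {G | LocallyCochordal G}ᶜ ≤ 2 * (b n)^5 := by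
        calc erProb n (p n) {G | LocallyCochordal G}ᶜ
            ≤ ∑ m ∈ Finset.range (n+1), (n:ℝ)^(m+5) * (1 - p n)^(2*(m+4)) :=
              erProb_not_LC_le (hp n)
          _ ≤ 2 * ((n:ℝ)^5 * (1 - p n)^8) := geom_bound (hq0 n) hhalf
          _ = 2 * (b n)^5 := by rw [hb5]
      linarith
    · set c : ℕ → ℝ := fun n => (n:ℝ) * Real.sqrt (p n) with hc
      have hlim : Tendsto (fun n => 1 - (c n)^2) atTop (nhds 1) := by
        have h2' : Tendsto (fun n => (c n)^2) atTop (nhds 0) := by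
          have := h2.pow 2
          simpa using this
        have := h2'.const_sub 1
        simpa using this
      refine tendsto_of_tendsto_of_tendsto_of_le_of_le' hlim tendsto_const_nhds
        (Eventually.of_forall fun n => ?_)
        (Eventually.of_forall fun n => erProb_le_one (hp n) _)
      have hc2 : (c n)^2 = (n:ℝ)^2 * p n := by
        rw [hc, mul_pow, Real.sq_sqrt (hp n).1]
      have hcompl := erProb_add_compl (n := n) (p := p n) {G | LocallyCochordal G}
      have hle : erProb n (p n) {G | LocallyCochordal G}ᶜ ≤ (c n)^2 := by
        rw [hc2]; exact erProb_not_LC_le2 (hp n)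
      linarith
  refine ⟨key, ?_⟩
  refine tendsto_of_tendsto_of_tendsto_of_le_of_le' key tendsto_const_nhds
    (Eventually.of_forall fun n => ?_)
    (Eventually.of_forall fun n => erProb_le_one (hp n) _)
  exact erProb_mono (hp n) fun G hG => locallyCochordal_fourCochordal hG
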